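/- Let X ∈ ℝ^{n×d}, let i ≠ j with i ∈ {1,…,n}, suppose the row X_j is nonzero, let δ ≥ 0 and η ∈ {−1,1}. Define Γ ∈ ℝ^{n×d} by Γ_i = η·δ·X_j/‖X_j‖₂ and Γ_k = 0 for k ≠ i. Then Γ is an admissible ℓ2-perturbation of X with budget δ and adversarial node set U = {i}, and with X̃ = X + Γ one has (X̃X̃ᵀ)_{ij} = (XXᵀ)_{ij} + η·δ‖X_j‖₂. In particular, for η = 1 the worst-case upper bound Δ^U_{ij} = δ‖X_j‖₂ and for η = −1 the worst-case lower bound Δ^L_{ij} = −δ‖X_j‖₂ are attained exactly. -/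

import Mathlib

open Finset Matrix

/-- **Tightness of the ℓ2 bounds for a single adversarial node.**
For `i ≠ j`, a nonzero row `X j`, `δ ≥ 0` and a sign `η ∈ {−1,1}`, the perturbation
`Γ` with `Γ i = η·δ·X_j/‖X_j‖₂` and zero elsewhere is an admissible
ℓ2-perturbation with adversarial set `U = {i}`, and it attains
`(X̃X̃ᵀ)_{ij} = (XXᵀ)_{ij} + η·δ‖X_j‖₂`; for `η = 1` this is the worst-case upper
bound `δ‖X_j‖₂` and for `η = −1` the worst-case lower bound `−δ‖X_j‖₂`. -/
theorem l2_single_node_bounds_tight {n d : ℕ}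
    (X : Matrix (Fin n) (Fin d) ℝ)
    (i j : Fin n) (hij : i ≠ j)
    (hXj : X j ≠ 0)
    (δ : ℝ) (hδ : 0 ≤ δ) (η : ℝ) (hη : η = 1 ∨ η = -1)
    (Γ : Matrix (Fin n) (Fin d) ℝ)
    (hΓi : ∀ p, Γ i p = η * δ * X j p / Real.sqrt (∑ q, (X j q) ^ 2))
    (hΓ0 : ∀ k, k ≠ i → Γ k = 0) :
    ((∀ k, k ∉ ({i} : Finset (Fin n)) → Γ k = 0)
      ∧ (∀ k ∈ ({i} : Finset (Fin n)), Real.sqrt (∑ p, (Γ k p) ^ 2) ≤ δ))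
    ∧ ((X + Γ) * (X + Γ)ᵀ) i j
        = (X * Xᵀ) i j + η * δ * Real.sqrt (∑ q, (X j q) ^ 2) := by
  set s := Real.sqrt (∑ q, (X j q) ^ 2) with hs
  have hsum_pos : 0 < ∑ q, (X j q) ^ 2 := by
    have : ∃ q, X j q ≠ 0 := by
      by_contra h
      push_neg at h
      exact hXj (funext h)
    obtain ⟨q, hq⟩ := this
    exact Finset.sum_pos' (fun q _ => sq_nonneg _)
      ⟨q, Finset.mem_univ q, by positivity⟩
  have hspos : 0 < s := Real.sqrt_pos.mpr hsum_pos
  have hs2 : s ^ 2 = ∑ q, (X j q) ^ 2 := Real.sq_sqrt hsum_pos.le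
  have hη2 : η ^ 2 = 1 := by rcases hη with h | h <;> simp [h]
  constructor
  · constructor
    · intro k hk
      exact hΓ0 k (by simpa using hk)
    · intro k hk
      have hk' : k = i := by simpa using hk
      subst hk'
      have : (∑ p, (Γ k p) ^ 2) = δ ^ 2 := by
        have : (∑ p, (Γ k p) ^ 2)
            = (η * δ / s) ^ 2 * ∑ p, (X j p) ^ 2 := by
          rw [Finset.mul_sum]
          refine Finset.sum_congr rfl fun p _ => ?_
          rw [hΓi p]
          ring
        rw [this, ← hs2]
        field_simp
        calc η ^ 2 * δ ^ 2 = η ^ 2 * δ ^ 2 := by ring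
          _ = δ ^ 2 := by rw [hη2, one_mul]
      rw [this, Real.sqrt_sq hδ]
  · have hΓj : Γ j = 0 := hΓ0 j (Ne.symm hij)
    have hdot : (∑ p, Γ i p * X j p) = η * δ * s := by
      have : (∑ p, Γ i p * X j p) = (η * δ / s) * ∑ p, (X j p) ^ 2 := by
        rw [Finset.mul_sum]
        refine Finset.sum_congr rfl fun p _ => ?_
        rw [hΓi p]; ring
      rw [this, ← hs2]
      field_simp
    simp only [Matrix.mul_apply, Matrix.transpose_apply, Matrix.add_apply, hΓj,
      Pi.zero_apply, add_zero]
    rw [← hdot]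
    rw [← Finset.sum_add_distrib]
    exact Finset.sum_congr rfl fun p _ => by ring
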